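/- arXiv:1703.06065 — 6 statements merged into one kernel-verified Lean document; each statement's English description precedes it below -/
import Mathlib

section
/- Variance of the block sampling estimator: with the setup of block matrix-product sampling, if g blocks j_1,...,j_g are drawn i.i.d. with probabilities p_k, and CR = Σ_{t=1}^g A^{(j_t)} B_{(j_t)} / (g p_{j_t}), then for each entry (i_1,i_2), Var[(CR)_{i_1 i_2}] = (1/g)( Σ_{k=1}^G (A^{(k)} B_{(k)})_{i_1 i_2}^2 / p_k − (AB)_{i_1 i_2}^2 ). -/
open Matrix Finset
open scoped Classical
noncomputable section
/-- Squared Frobenius norm. -/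
def frobSq {m n : Type*} [Fintype m] [Fintype n] (A : Matrix m n ℝ) : ℝ := ∑ i, ∑ j, (A i j)^2
/-- Frobenius norm. -/
def frob {m n : Type*} [Fintype m] [Fintype n] (A : Matrix m n ℝ) : ℝ := Real.sqrt (frobSq A)
/-- Spectral (operator) norm. -/
def specNorm {m n : Type*} [Fintype m] [Fintype n] [DecidableEq n] (A : Matrix m n ℝ) : ℝ :=
  ‖LinearMap.toContinuousLinearMap (Matrix.toEuclideanLin A)‖
/-- Moore-Penrose pseudoinverse, via the four Penrose conditions. -/
def IsPinv {m n : Type*} [Fintype m] [Fintype n] (M : Matrix m n ℝ) (P : Matrix n m ℝ) : Prop :=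
  M * P * M = M ∧ P * M * P = P ∧ (M * P)ᵀ = M * P ∧ (P * M)ᵀ = P * M

lemma sum_prod_eval (g G : ℕ) (f : Fin g → Fin G → ℝ) :
    ∑ ω : Fin g → Fin G, ∏ t, f t (ω t) = ∏ t, ∑ k, f t k := by
  rw [Finset.prod_univ_sum]; simp

lemma marg_one (g G : ℕ) (pr : Fin G → ℝ) (hsum : ∑ k, pr k = 1)
    (t₀ : Fin g) (F : Fin G → ℝ) :
    ∑ ω : Fin g → Fin G, (∏ t, pr (ω t)) * F (ω t₀) = ∑ k, pr k * F k := by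
  have h1 : ∀ ω : Fin g → Fin G, (∏ t, pr (ω t)) * F (ω t₀)
      = ∏ t, (pr (ω t) * (if t = t₀ then F (ω t) else 1)) := by
    intro ω
    rw [Finset.prod_mul_distrib, Finset.prod_ite_eq' Finset.univ t₀ (fun t => F (ω t))]
    simp
  simp_rw [h1]
  rw [sum_prod_eval g G (fun t k => pr k * (if t = t₀ then F k else 1))]
  have h2 : ∀ t : Fin g, (∑ k, pr k * (if t = t₀ then F k else 1))
      = if t = t₀ then ∑ k, pr k * F k else 1 := by
    intro t; by_cases h : t = t₀ <;> simp [h, hsum]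
  simp_rw [h2]
  rw [Finset.prod_ite_eq' Finset.univ t₀ (fun _ => ∑ k, pr k * F k)]
  simp

lemma marg_two (g G : ℕ) (pr : Fin G → ℝ) (hsum : ∑ k, pr k = 1)
    (t₀ u₀ : Fin g) (hne : t₀ ≠ u₀) (F H : Fin G → ℝ) :
    ∑ ω : Fin g → Fin G, (∏ t, pr (ω t)) * (F (ω t₀) * H (ω u₀))
      = (∑ k, pr k * F k) * (∑ k, pr k * H k) := by
  have h1 : ∀ ω : Fin g → Fin G, (∏ t, pr (ω t)) * (F (ω t₀) * H (ω u₀))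
      = ∏ t, (pr (ω t) * ((if t = t₀ then F (ω t) else 1) * (if t = u₀ then H (ω t) else 1))) := by
    intro ω
    rw [Finset.prod_mul_distrib, Finset.prod_mul_distrib,
      Finset.prod_ite_eq' Finset.univ t₀ (fun t => F (ω t)),
      Finset.prod_ite_eq' Finset.univ u₀ (fun t => H (ω t))]
    simp
  simp_rw [h1]
  rw [sum_prod_eval g G (fun t k => pr k * ((if t = t₀ then F k else 1) * (if t = u₀ then H k else 1)))]
  have h2 : ∀ t : Fin g, (∑ k, pr k * ((if t = t₀ then F k else 1) * (if t = u₀ then H k else 1)))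
      = if t = t₀ then (∑ k, pr k * F k) else (if t = u₀ then (∑ k, pr k * H k) else 1) := by
    intro t
    by_cases h : t = t₀
    · have : t ≠ u₀ := h ▸ hne
      simp [h, this, hne]
    · by_cases h' : t = u₀ <;> simp [h, h', Ne.symm hne, hsum]
  simp_rw [h2]
  have hu : u₀ ∈ (Finset.univ.erase t₀) := Finset.mem_erase.2 ⟨Ne.symm hne, Finset.mem_univ _⟩
  rw [← Finset.mul_prod_erase _ _ (Finset.mem_univ t₀), if_pos rfl,
    ← Finset.mul_prod_erase _ _ hu, if_neg (Ne.symm hne), if_pos rfl]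
  have hone : ∏ x ∈ ((Finset.univ.erase t₀).erase u₀),
      (if x = t₀ then (∑ k, pr k * F k) else if x = u₀ then (∑ k, pr k * H k) else 1) = 1 := by
    apply Finset.prod_eq_one
    intro x hx
    simp only [Finset.mem_erase, Finset.mem_univ] at hx
    simp [hx.1, hx.2.1]
  rw [hone]
  ring

/-- Variance of the block sampling estimator, entrywise. -/
theorem block_sampling_variance (m n q G g : ℕ) (hg : 0 < g)
    (s : Fin G → ℕ)
    (A : Matrix (Fin m) (Fin n) ℝ) (B : Matrix (Fin n) (Fin q) ℝ)
    (Ablk : (j : Fin G) → Matrix (Fin m) (Fin (s j)) ℝ)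
    (Bblk : (j : Fin G) → Matrix (Fin (s j)) (Fin q) ℝ)
    (hAB : A * B = ∑ j : Fin G, Ablk j * Bblk j)
    (pr : Fin G → ℝ) (hpos : ∀ j, 0 < pr j) (hsum : ∑ j : Fin G, pr j = 1)
    (i₁ : Fin m) (i₂ : Fin q) :
    (∑ ω : Fin g → Fin G, (∏ t, pr (ω t)) *
        (∑ t, ((g : ℝ) * pr (ω t))⁻¹ * (Ablk (ω t) * Bblk (ω t)) i₁ i₂)^2)
      - (∑ ω : Fin g → Fin G, (∏ t, pr (ω t)) *
        (∑ t, ((g : ℝ) * pr (ω t))⁻¹ * (Ablk (ω t) * Bblk (ω t)) i₁ i₂))^2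
      = (1 / (g : ℝ)) *
        ((∑ j : Fin G, ((Ablk j * Bblk j) i₁ i₂)^2 / pr j) - ((A * B) i₁ i₂)^2) := by
  have hg0 : (g : ℝ) ≠ 0 := Nat.cast_ne_zero.2 hg.ne'
  have hp0 : ∀ k, pr k ≠ 0 := fun k => (hpos k).ne'
  set c : Fin G → ℝ := fun k => (Ablk k * Bblk k) i₁ i₂ with hc
  set w : Fin G → ℝ := fun k => ((g : ℝ) * pr k)⁻¹ * c k with hw
  have hμ : (A * B) i₁ i₂ = ∑ k, c k := by
    rw [hAB, Matrix.sum_apply]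
  have hw1 : ∀ k, pr k * w k = (g : ℝ)⁻¹ * c k := by
    intro k; simp only [hw]; field_simp [hp0 k]
  have hw2 : ∀ k, pr k * (w k * w k) = (g : ℝ)⁻¹ * (g : ℝ)⁻¹ * (c k ^ 2 / pr k) := by
    intro k; simp only [hw]; field_simp [hp0 k]
  -- expectation
  have hE : (∑ ω : Fin g → Fin G, (∏ t, pr (ω t)) * (∑ t, w (ω t))) = ∑ k, c k := by
    calc ∑ ω : Fin g → Fin G, (∏ t, pr (ω t)) * (∑ t, w (ω t))
        = ∑ ω : Fin g → Fin G, ∑ t, (∏ t', pr (ω t')) * w (ω t) := by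
          simp_rw [Finset.mul_sum]
      _ = ∑ t : Fin g, ∑ ω : Fin g → Fin G, (∏ t', pr (ω t')) * w (ω t) := Finset.sum_comm
      _ = ∑ _t : Fin g, ∑ k, pr k * w k := by
          exact Finset.sum_congr rfl fun t _ => marg_one g G pr hsum t w
      _ = (g : ℝ) * ∑ k, (g : ℝ)⁻¹ * c k := by
          simp_rw [hw1]; simp [mul_comm]
      _ = ∑ k, c k := by
          rw [← Finset.mul_sum, ← mul_assoc, mul_inv_cancel₀ hg0, one_mul]
  -- second moment
  have hS : ∀ t u : Fin g, (∑ ω : Fin g → Fin G, (∏ t', pr (ω t')) * (w (ω t) * w (ω u)))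
      = if t = u then (g:ℝ)⁻¹ * (g:ℝ)⁻¹ * ∑ k, c k ^ 2 / pr k
        else ((g:ℝ)⁻¹ * ∑ k, c k) * ((g:ℝ)⁻¹ * ∑ k, c k) := by
    intro t u
    by_cases h : t = u
    · subst h
      rw [if_pos rfl, marg_one g G pr hsum t (fun k => w k * w k)]
      simp_rw [hw2]
      rw [← Finset.mul_sum]
    · rw [if_neg h, marg_two g G pr hsum t u h w w]
      simp_rw [hw1]
      rw [← Finset.mul_sum]
  have hE2 : (∑ ω : Fin g → Fin G, (∏ t, pr (ω t)) * (∑ t, w (ω t))^2)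
      = ∑ t : Fin g, ∑ u : Fin g,
        (if t = u then (g:ℝ)⁻¹ * (g:ℝ)⁻¹ * ∑ k, c k ^ 2 / pr k
         else ((g:ℝ)⁻¹ * ∑ k, c k) * ((g:ℝ)⁻¹ * ∑ k, c k)) := by
    calc ∑ ω : Fin g → Fin G, (∏ t, pr (ω t)) * (∑ t, w (ω t))^2
        = ∑ ω : Fin g → Fin G, ∑ t, ∑ u, (∏ t', pr (ω t')) * (w (ω t) * w (ω u)) := by
          refine Finset.sum_congr rfl fun ω _ => ?_
          rw [pow_two, Finset.sum_mul_sum]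
          rw [Finset.mul_sum]
          refine Finset.sum_congr rfl fun t _ => ?_
          rw [Finset.mul_sum]
      _ = ∑ t : Fin g, ∑ ω : Fin g → Fin G, ∑ u, (∏ t', pr (ω t')) * (w (ω t) * w (ω u)) :=
          Finset.sum_comm
      _ = ∑ t : Fin g, ∑ u : Fin g, ∑ ω : Fin g → Fin G, (∏ t', pr (ω t')) * (w (ω t) * w (ω u)) :=
          Finset.sum_congr rfl fun t _ => Finset.sum_comm
      _ = _ := Finset.sum_congr rfl fun t _ => Finset.sum_congr rfl fun u _ => hS t u
  -- evaluate the double sum of ifs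
  set D : ℝ := (g:ℝ)⁻¹ * (g:ℝ)⁻¹ * ∑ k, c k ^ 2 / pr k with hD
  set O : ℝ := ((g:ℝ)⁻¹ * ∑ k, c k) * ((g:ℝ)⁻¹ * ∑ k, c k) with hO
  have hdouble : (∑ t : Fin g, ∑ u : Fin g, (if t = u then D else O))
      = (g:ℝ) * D + ((g:ℝ) * (g:ℝ) - (g:ℝ)) * O := by
    have h1 : ∀ t : Fin g, (∑ u : Fin g, (if t = u then D else O))
        = D + ((g:ℝ) - 1) * O := by
      intro t
      have : ∀ u : Fin g, (if t = u then D else O) = O + (if t = u then D - O else 0) := by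
        intro u; by_cases h : t = u <;> simp [h]
      simp_rw [this, Finset.sum_add_distrib, Finset.sum_ite_eq]
      simp
      ring
    simp_rw [h1]
    simp
    ring
  rw [hE, hE2, hdouble, hμ]
  rw [hD, hO]
  field_simp
  ring
end
end

section
/- Expected squared Frobenius error of block sampling: with the setup above, E[||AB − CR||_F^2] = (1/g)( Σ_{k=1}^G ||A^{(k)} B_{(k)}||_F^2 / p_k − ||AB||_F^2 ). -/
open Matrix Finset
open scoped Classical
noncomputable section
lemma sum_fn_prod {g G : ℕ} (f : Fin g → Fin G → ℝ) :
    ∑ ω : Fin g → Fin G, ∏ t, f t (ω t) = ∏ t, ∑ j, f t j := by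
  rw [Finset.prod_univ_sum, Fintype.piFinset_univ]

lemma marginal1 {g G : ℕ} (pr : Fin G → ℝ) (hsum : ∑ j, pr j = 1)
    (h : Fin G → ℝ) (t0 : Fin g) :
    ∑ ω : Fin g → Fin G, (∏ t, pr (ω t)) * h (ω t0) = ∑ j, pr j * h j := by
  have key : ∀ ω : Fin g → Fin G, (∏ t, pr (ω t)) * h (ω t0)
      = ∏ t, (pr (ω t) * (if t = t0 then h (ω t) else 1)) := by
    intro ω
    rw [Finset.prod_mul_distrib]
    congr 1
    simp [Finset.prod_ite_eq']
  simp_rw [key]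
  rw [sum_fn_prod (fun t j => pr j * (if t = t0 then h j else 1))]
  have h2 : ∀ t : Fin g, (∑ j, pr j * (if t = t0 then h j else 1))
      = if t = t0 then ∑ j, pr j * h j else 1 := by
    intro t; by_cases h' : t = t0 <;> simp [h', hsum]
  simp_rw [h2]
  simp [Finset.prod_ite_eq']

lemma marginal2 {g G : ℕ} (pr : Fin G → ℝ) (hsum : ∑ j, pr j = 1)
    (h1 h2 : Fin G → ℝ) (t0 t1 : Fin g) (hne : t0 ≠ t1) :
    ∑ ω : Fin g → Fin G, (∏ t, pr (ω t)) * (h1 (ω t0) * h2 (ω t1))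
      = (∑ j, pr j * h1 j) * (∑ j, pr j * h2 j) := by
  have key : ∀ ω : Fin g → Fin G, (∏ t, pr (ω t)) * (h1 (ω t0) * h2 (ω t1))
      = ∏ t, (pr (ω t) * ((if t = t0 then h1 (ω t) else 1) * (if t = t1 then h2 (ω t) else 1))) := by
    intro ω
    rw [Finset.prod_mul_distrib, Finset.prod_mul_distrib]
    simp [Finset.prod_ite_eq']
  simp_rw [key]
  rw [sum_fn_prod (fun t j => pr j * ((if t = t0 then h1 j else 1) * (if t = t1 then h2 j else 1)))]
  have hs : ∀ t : Fin g, (∑ j, pr j * ((if t = t0 then h1 j else 1) * (if t = t1 then h2 j else 1)))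
      = (if t = t0 then ∑ j, pr j * h1 j else 1) * (if t = t1 then ∑ j, pr j * h2 j else 1) := by
    intro t
    by_cases e0 : t = t0
    · subst e0
      have : t ≠ t1 := hne
      simp [this]
    · by_cases e1 : t = t1
      · subst e1
        simp [e0, hsum, hne.symm, (Ne.symm hne : t ≠ t0)]
      · simp [e0, e1, hsum]
  simp_rw [hs]
  rw [Finset.prod_mul_distrib]
  simp [Finset.prod_ite_eq']

lemma scalar_expect {g G : ℕ} (hg : 0 < g) (pr v : Fin G → ℝ)
    (hpos : ∀ j, 0 < pr j) (hsum : ∑ j, pr j = 1) :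
    ∑ ω : Fin g → Fin G, (∏ t, pr (ω t)) *
        ((∑ j, v j) - ∑ t, ((g : ℝ) * pr (ω t))⁻¹ * v (ω t))^2
      = (1 / (g : ℝ)) * ((∑ j, (v j)^2 / pr j) - (∑ j, v j)^2) := by
  have hgne : (g : ℝ) ≠ 0 := Nat.cast_ne_zero.mpr hg.ne'
  set u : Fin G → ℝ := fun j => ((g : ℝ) * pr j)⁻¹ * v j with hu
  set S : ℝ := ∑ j, v j with hS
  set a : ℝ := ∑ j, pr j * u j with haDef
  set b : ℝ := ∑ j, pr j * (u j * u j) with hbDef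
  have ha : a = S / g := by
    rw [haDef, hS, Finset.sum_div]
    refine Finset.sum_congr rfl fun j _ => ?_
    have hj : pr j ≠ 0 := (hpos j).ne'
    rw [hu]
    field_simp
  have hb : b = (∑ j, (v j)^2 / pr j) / (g : ℝ)^2 := by
    rw [hbDef, Finset.sum_div]
    refine Finset.sum_congr rfl fun j _ => ?_
    have hj : pr j ≠ 0 := (hpos j).ne'
    rw [hu]
    field_simp
  have expand : ∀ ω : Fin g → Fin G,
      (∏ t, pr (ω t)) * (S - ∑ t, u (ω t))^2
        = (∏ t, pr (ω t)) * S^2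
          - 2 * S * ∑ t, (∏ t', pr (ω t')) * u (ω t)
          + ∑ t0, ∑ t1, (∏ t', pr (ω t')) * (u (ω t0) * u (ω t1)) := by
    intro ω
    simp_rw [← Finset.mul_sum]
    rw [← Finset.sum_mul]
    ring
  change ∑ ω : Fin g → Fin G, (∏ t, pr (ω t)) * (S - ∑ t, u (ω t))^2 = _
  simp_rw [expand]
  rw [Finset.sum_add_distrib, Finset.sum_sub_distrib]
  have T0 : ∑ ω : Fin g → Fin G, (∏ t, pr (ω t)) * S^2 = S^2 := by
    rw [← Finset.sum_mul]
    have h1 : ∑ ω : Fin g → Fin G, ∏ t, pr (ω t) = 1 := by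
      rw [sum_fn_prod (fun _ j => pr j)]
      simp [hsum]
    rw [h1, one_mul]
  have T1 : ∑ ω : Fin g → Fin G, 2 * S * ∑ t, (∏ t', pr (ω t')) * u (ω t)
      = 2 * S * ((g : ℝ) * a) := by
    rw [← Finset.mul_sum]
    congr 1
    rw [Finset.sum_comm]
    have : ∀ t : Fin g, ∑ ω : Fin g → Fin G, (∏ t', pr (ω t')) * u (ω t) = a :=
      fun t => marginal1 pr hsum u t
    simp_rw [this]
    simp [mul_comm]
  have T2 : ∑ ω : Fin g → Fin G, ∑ t0, ∑ t1, (∏ t', pr (ω t')) * (u (ω t0) * u (ω t1))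
      = (g : ℝ)^2 * (a * a) + (g : ℝ) * (b - a * a) := by
    rw [Finset.sum_comm]
    have hcomm : ∀ t0 : Fin g, ∑ ω : Fin g → Fin G, ∑ t1, (∏ t', pr (ω t')) * (u (ω t0) * u (ω t1))
        = ∑ t1, ∑ ω : Fin g → Fin G, (∏ t', pr (ω t')) * (u (ω t0) * u (ω t1)) :=
      fun t0 => Finset.sum_comm
    simp_rw [hcomm]
    have hval : ∀ t0 t1 : Fin g, ∑ ω : Fin g → Fin G, (∏ t', pr (ω t')) * (u (ω t0) * u (ω t1))
        = if t0 = t1 then b else a * a := by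
      intro t0 t1
      by_cases e : t0 = t1
      · subst e
        simp only [if_pos rfl]
        exact marginal1 pr hsum (fun j => u j * u j) t0
      · rw [if_neg e]
        exact marginal2 pr hsum u u t0 t1 e
    simp_rw [hval]
    have hsplit : ∀ t0 t1 : Fin g, (if t0 = t1 then b else a * a)
        = a * a + (if t0 = t1 then b - a * a else 0) := by
      intro t0 t1; split <;> ring
    have hrow : ∀ t0 : Fin g, ∑ t1, (a * a + if t0 = t1 then b - a * a else 0)
        = (g : ℝ) * (a * a) + (b - a * a) := by
      intro t0
      rw [Finset.sum_add_distrib, Finset.sum_ite_eq, Finset.sum_const, Finset.card_univ,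
        Fintype.card_fin, nsmul_eq_mul]
      simp
    simp_rw [hsplit, hrow, Finset.sum_const, Finset.card_univ, Fintype.card_fin, nsmul_eq_mul]
    ring
  rw [T0, T1, T2, ha, hb]
  field_simp
  ring
/-- Expected squared Frobenius error of block sampling. -/
theorem block_sampling_expected_frobenius_error (m n q G g : ℕ) (hg : 0 < g)
    (s : Fin G → ℕ)
    (A : Matrix (Fin m) (Fin n) ℝ) (B : Matrix (Fin n) (Fin q) ℝ)
    (Ablk : (j : Fin G) → Matrix (Fin m) (Fin (s j)) ℝ)
    (Bblk : (j : Fin G) → Matrix (Fin (s j)) (Fin q) ℝ)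
    (hAB : A * B = ∑ j : Fin G, Ablk j * Bblk j)
    (pr : Fin G → ℝ) (hpos : ∀ j, 0 < pr j) (hsum : ∑ j : Fin G, pr j = 1) :
    ∑ ω : Fin g → Fin G, (∏ t, pr (ω t)) *
        frobSq (A * B - ∑ t, ((g : ℝ) * pr (ω t))⁻¹ • (Ablk (ω t) * Bblk (ω t)))
      = (1 / (g : ℝ)) *
        ((∑ j : Fin G, frobSq (Ablk j * Bblk j) / pr j) - frobSq (A * B)) := by
  have hABe : ∀ (i : Fin m) (k : Fin q), (A * B) i k = ∑ j, (Ablk j * Bblk j) i k := by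
    intro i k
    rw [hAB, Matrix.sum_apply]
  have entry : ∀ (ω : Fin g → Fin G) (i : Fin m) (k : Fin q),
      (A * B - ∑ t, ((g : ℝ) * pr (ω t))⁻¹ • (Ablk (ω t) * Bblk (ω t))) i k
        = (∑ j, (Ablk j * Bblk j) i k)
          - ∑ t, ((g : ℝ) * pr (ω t))⁻¹ * ((Ablk (ω t) * Bblk (ω t)) i k) := by
    intro ω i k
    rw [Matrix.sub_apply, Matrix.sum_apply, hABe i k]
    simp [Matrix.smul_apply, smul_eq_mul]
  have lhs_eq : ∑ ω : Fin g → Fin G, (∏ t, pr (ω t)) *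
        frobSq (A * B - ∑ t, ((g : ℝ) * pr (ω t))⁻¹ • (Ablk (ω t) * Bblk (ω t)))
      = ∑ i, ∑ k, ∑ ω : Fin g → Fin G, (∏ t, pr (ω t)) *
          ((∑ j, (Ablk j * Bblk j) i k)
            - ∑ t, ((g : ℝ) * pr (ω t))⁻¹ * ((Ablk (ω t) * Bblk (ω t)) i k))^2 := by
    unfold frobSq
    simp_rw [entry, Finset.mul_sum]
    rw [Finset.sum_comm]
    refine Finset.sum_congr rfl fun i _ => Finset.sum_comm
  rw [lhs_eq]
  have step : ∀ (i : Fin m) (k : Fin q),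
      ∑ ω : Fin g → Fin G, (∏ t, pr (ω t)) *
          ((∑ j, (Ablk j * Bblk j) i k)
            - ∑ t, ((g : ℝ) * pr (ω t))⁻¹ * ((Ablk (ω t) * Bblk (ω t)) i k))^2
        = (1 / (g : ℝ)) * ((∑ j, ((Ablk j * Bblk j) i k)^2 / pr j)
            - (∑ j, (Ablk j * Bblk j) i k)^2) := fun i k =>
    scalar_expect hg pr (fun j => (Ablk j * Bblk j) i k) hpos hsum
  simp_rw [step, ← Finset.mul_sum]
  congr 1
  simp_rw [Finset.sum_sub_distrib]
  congr 1
  · have hfr : ∀ j : Fin G, frobSq (Ablk j * Bblk j) / pr j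
        = ∑ i, ∑ k, ((Ablk j * Bblk j) i k)^2 / pr j := by
      intro j
      unfold frobSq
      rw [Finset.sum_div]
      simp_rw [Finset.sum_div]
    simp_rw [hfr]
    conv_rhs => rw [Finset.sum_comm]
    refine Finset.sum_congr rfl fun i _ => Finset.sum_comm
  · unfold frobSq
    refine Finset.sum_congr rfl fun i _ => Finset.sum_congr rfl fun k _ => ?_
    rw [hABe i k]
end
end

section
/- Block stable rank bound on the sampling variance: if the sampling probabilities satisfy p_k ≥ β ||A^{(k)}||_F^2 / Σ_j ||A^{(j)}||_F^2 for all k, with β ∈ (0,1], and α_A = min_k ||A^{(k)}||_F^2 / ||A^{(k)}||_2^2, then E[||AB − CR||_F^2] ≤ ||A||_F^2 ||B||_F^2 / (β α_A g). -/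
open Matrix Finset
open scoped Classical
noncomputable section
section Aux
lemma frobSq_nonneg {m n : Type*} [Fintype m] [Fintype n] (A : Matrix m n ℝ) : 0 ≤ frobSq A := by
  apply Finset.sum_nonneg; intro i _; apply Finset.sum_nonneg; intro j _; positivity

lemma frobSq_pos {m n : Type*} [Fintype m] [Fintype n] (A : Matrix m n ℝ) (h : A ≠ 0) :
    0 < frobSq A := by
  have hex : ∃ i j, A i j ≠ 0 := by
    by_contra hc; push_neg at hc; exact h (by ext i j; simpa using hc i j)
  obtain ⟨i, j, hij⟩ := hex
  have h1 : (A i j)^2 ≤ ∑ j', (A i j')^2 :=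
    Finset.single_le_sum (f := fun j' => (A i j')^2) (fun j' _ => sq_nonneg _) (Finset.mem_univ j)
  have h2 : (∑ j', (A i j')^2) ≤ frobSq A :=
    Finset.single_le_sum (f := fun i' => ∑ j', (A i' j')^2) (fun i' _ => Finset.sum_nonneg fun j' _ => sq_nonneg _) (Finset.mem_univ i)
  have : 0 < (A i j)^2 := by positivity
  linarith

lemma mulVec_sq_le {m n : ℕ} (A : Matrix (Fin m) (Fin n) ℝ) (v : Fin n → ℝ) :
    ∑ i, (A.mulVec v i)^2 ≤ (specNorm A)^2 * ∑ j, (v j)^2 := by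
  set x : EuclideanSpace ℝ (Fin n) := (WithLp.equiv 2 _).symm v
  have hx : ‖x‖^2 = ∑ j, (v j)^2 := by
    rw [EuclideanSpace.norm_eq, Real.sq_sqrt (Finset.sum_nonneg fun _ _ => by positivity)]
    simp [x, Real.norm_eq_abs, sq_abs]
  have hy : ‖(LinearMap.toContinuousLinearMap (Matrix.toEuclideanLin A)) x‖^2 = ∑ i, (A.mulVec v i)^2 := by
    rw [EuclideanSpace.norm_eq, Real.sq_sqrt (Finset.sum_nonneg fun _ _ => by positivity)]
    simp [Matrix.toEuclideanLin_apply, x, Real.norm_eq_abs, sq_abs]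
  calc ∑ i, (A.mulVec v i)^2 = ‖(LinearMap.toContinuousLinearMap (Matrix.toEuclideanLin A)) x‖^2 := hy.symm
    _ ≤ (specNorm A * ‖x‖)^2 := by
        apply pow_le_pow_left₀ (norm_nonneg _)
        exact (LinearMap.toContinuousLinearMap (Matrix.toEuclideanLin A)).le_opNorm x
    _ = (specNorm A)^2 * ‖x‖^2 := by ring
    _ = (specNorm A)^2 * ∑ j, (v j)^2 := by rw [hx]

lemma frobSq_mul_le {m n q : ℕ} (A : Matrix (Fin m) (Fin n) ℝ) (B : Matrix (Fin n) (Fin q) ℝ) :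
    frobSq (A * B) ≤ (specNorm A)^2 * frobSq B := by
  have h0 : frobSq (A * B) = ∑ l, ∑ i, (A.mulVec (fun k => B k l) i)^2 := by
    rw [frobSq, Finset.sum_comm]
    refine Finset.sum_congr rfl fun l _ => Finset.sum_congr rfl fun i _ => ?_
    simp [Matrix.mul_apply, Matrix.mulVec, dotProduct]
  rw [h0]
  calc ∑ l, ∑ i, (A.mulVec (fun k => B k l) i)^2
      ≤ ∑ l, ((specNorm A)^2 * ∑ k, (B k l)^2) :=
        Finset.sum_le_sum (fun l _ => mulVec_sq_le A (fun k => B k l))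
    _ = (specNorm A)^2 * frobSq B := by rw [← Finset.mul_sum, frobSq, Finset.sum_comm]

lemma specNorm_pos {m n : ℕ} (A : Matrix (Fin m) (Fin n) ℝ) (h : A ≠ 0) : 0 < specNorm A := by
  rcases (norm_nonneg (LinearMap.toContinuousLinearMap (Matrix.toEuclideanLin A))).lt_or_eq with h' | h'
  · exact h'
  · exfalso; apply h
    have h0 : LinearMap.toContinuousLinearMap (Matrix.toEuclideanLin A) = 0 := by
      rwa [eq_comm, norm_eq_zero] at h'
    ext i j
    have h1 := congrArg (fun f => f ((WithLp.equiv 2 _).symm (Pi.single j 1))) (congrArg DFunLike.coe h0)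
    simp only [Matrix.toEuclideanLin_apply, ContinuousLinearMap.coe_zero, Pi.zero_apply,
      LinearMap.coe_toContinuousLinearMap'] at h1
    have h2 := congrFun (congrArg (WithLp.equiv 2 _) h1) i
    simp [Matrix.mulVec_single] at h2
    simpa using h2

variable {G g : ℕ} (pr : Fin G → ℝ)

lemma exp_prod (F : Fin g → Fin G → ℝ) :
    ∑ ω : Fin g → Fin G, ∏ t, F t (ω t) = ∏ t, ∑ j, F t j := by
  rw [Finset.prod_univ_sum]
  simp

lemma exp_one (hsum : ∑ j, pr j = 1) :
    ∑ ω : Fin g → Fin G, ∏ t, pr (ω t) = 1 := by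
  rw [exp_prod (fun _ j => pr j)]
  simp [hsum]

lemma exp_single (hsum : ∑ j, pr j = 1) (t0 : Fin g) (h : Fin G → ℝ) :
    ∑ ω : Fin g → Fin G, (∏ t, pr (ω t)) * h (ω t0) = ∑ j, pr j * h j := by
  have key : ∀ ω : Fin g → Fin G, (∏ t, pr (ω t)) * h (ω t0)
      = ∏ t, (pr (ω t) * (if t = t0 then h (ω t) else 1)) := by
    intro ω
    rw [Finset.prod_mul_distrib]
    congr 1
    simp [Finset.prod_ite_eq' Finset.univ t0 (fun t => h (ω t))]
  simp_rw [key]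
  rw [exp_prod (fun t j => pr j * (if t = t0 then h j else 1))]
  have : ∀ t : Fin g, (∑ j, pr j * (if t = t0 then h j else 1))
      = if t = t0 then (∑ j, pr j * h j) else 1 := by
    intro t; split <;> simp [hsum]
  simp_rw [this]
  simp [Finset.prod_ite_eq' Finset.univ t0 (fun _ => ∑ j, pr j * h j)]

lemma exp_pair (hsum : ∑ j, pr j = 1) (t0 t1 : Fin g) (hne : t0 ≠ t1) (h k : Fin G → ℝ) :
    ∑ ω : Fin g → Fin G, (∏ t, pr (ω t)) * (h (ω t0) * k (ω t1))
      = (∑ j, pr j * h j) * (∑ j, pr j * k j) := by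
  have key : ∀ ω : Fin g → Fin G, (∏ t, pr (ω t)) * (h (ω t0) * k (ω t1))
      = ∏ t, (pr (ω t) * (if t = t0 then h (ω t) else if t = t1 then k (ω t) else 1)) := by
    intro ω
    rw [Finset.prod_mul_distrib]
    congr 1
    have heach : ∀ t : Fin g, (if t = t0 then h (ω t) else if t = t1 then k (ω t) else 1)
        = (if t = t0 then h (ω t) else 1) * (if t = t1 then k (ω t) else 1) := by
      intro t
      rcases eq_or_ne t t0 with rfl | h0
      · simp [hne]
      · rcases eq_or_ne t t1 with rfl | h1
        · simp [h0]
        · simp [h0, h1]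
    simp_rw [heach]
    rw [Finset.prod_mul_distrib]
    simp [Finset.prod_ite_eq' Finset.univ t0 (fun t => h (ω t)),
      Finset.prod_ite_eq' Finset.univ t1 (fun t => k (ω t))]
  simp_rw [key]
  rw [exp_prod (fun t j => pr j * (if t = t0 then h j else if t = t1 then k j else 1))]
  have hsums : ∀ t : Fin g, (∑ j, pr j * (if t = t0 then h j else if t = t1 then k j else 1))
      = if t = t0 then (∑ j, pr j * h j) else if t = t1 then (∑ j, pr j * k j) else 1 := by
    intro t
    rcases eq_or_ne t t0 with rfl | h0
    · simp
    · rcases eq_or_ne t t1 with rfl | h1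
      · simp [h0]
      · simp [h0, h1, hsum]
  simp_rw [hsums]
  have heach2 : ∀ t : Fin g, (if t = t0 then (∑ j, pr j * h j) else if t = t1 then (∑ j, pr j * k j) else 1)
      = (if t = t0 then (∑ j, pr j * h j) else 1) * (if t = t1 then (∑ j, pr j * k j) else 1) := by
    intro t
    rcases eq_or_ne t t0 with rfl | h0
    · simp [hne]
    · rcases eq_or_ne t t1 with rfl | h1
      · simp [h0]
      · simp [h0, h1]
  simp_rw [heach2]
  rw [Finset.prod_mul_distrib]
  simp [Finset.prod_ite_eq' Finset.univ t0 (fun _ => ∑ j, pr j * h j),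
    Finset.prod_ite_eq' Finset.univ t1 (fun _ => ∑ j, pr j * k j)]

lemma scalar_var (hg : 0 < g) (hpos : ∀ j, 0 < pr j) (hsum : ∑ j, pr j = 1) (f : Fin G → ℝ) :
    ∑ ω : Fin g → Fin G, (∏ t, pr (ω t)) * ((∑ j, f j) - ∑ t, ((g:ℝ) * pr (ω t))⁻¹ * f (ω t))^2
      = (∑ j, (f j)^2 / pr j) / g - (∑ j, f j)^2 / g := by
  have hg' : (g:ℝ) ≠ 0 := Nat.cast_ne_zero.mpr hg.ne'
  set μ := ∑ j, f j with hμ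
  set c : Fin G → ℝ := fun j => ((g:ℝ) * pr j)⁻¹ * f j with hc
  set σ := ∑ j, pr j * c j with hσdef
  set D := ∑ j, pr j * (c j * c j) with hDdef
  have hσ : σ = μ / g := by
    rw [hσdef, hμ, Finset.sum_div]
    refine Finset.sum_congr rfl fun j _ => ?_
    have := (hpos j).ne'
    field_simp [hc]
    simp only [hc]; field_simp
  have hD : D = (∑ j, (f j)^2 / pr j) / g^2 := by
    rw [hDdef, Finset.sum_div]
    refine Finset.sum_congr rfl fun j _ => ?_
    have := (hpos j).ne'
    field_simp [hc]
    simp only [hc]; field_simp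
  have expand : ∀ ω : Fin g → Fin G, (∏ t, pr (ω t)) * (μ - ∑ t, c (ω t))^2
      = (∏ t, pr (ω t)) * μ^2
        - 2*μ * (∑ t, (∏ t', pr (ω t')) * c (ω t))
        + ∑ t, ∑ t', (∏ t'', pr (ω t'')) * (c (ω t) * c (ω t')) := by
    intro ω
    have h1 : (∑ t, c (ω t))^2 = ∑ t, ∑ t', c (ω t) * c (ω t') := by
      rw [sq, Finset.sum_mul_sum]
    have h2 : (∏ t, pr (ω t)) * (μ - ∑ t, c (ω t))^2
        = (∏ t, pr (ω t)) * μ^2 - 2*μ*((∏ t, pr (ω t)) * ∑ t, c (ω t))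
          + (∏ t, pr (ω t)) * ((∑ t, c (ω t))^2) := by ring
    rw [h2, h1]
    simp_rw [Finset.mul_sum]
  refine (Finset.sum_congr rfl fun ω _ => expand ω).trans ?_
  rw [Finset.sum_add_distrib, Finset.sum_sub_distrib]
  have T1 : ∑ ω : Fin g → Fin G, (∏ t, pr (ω t)) * μ^2 = μ^2 := by
    rw [← Finset.sum_mul, exp_one pr hsum, one_mul]
  have T2 : ∑ ω : Fin g → Fin G, 2*μ * (∑ t, (∏ t', pr (ω t')) * c (ω t)) = 2*μ*μ := by
    simp_rw [Finset.mul_sum]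
    rw [Finset.sum_comm]
    have : ∀ t : Fin g, ∑ ω : Fin g → Fin G, 2*μ*((∏ t', pr (ω t')) * c (ω t)) = 2*μ*(μ/g) := by
      intro t
      rw [← Finset.mul_sum, exp_single pr hsum t c, ← hσdef, hσ]
    simp_rw [this]
    rw [Finset.sum_const]
    simp
    field_simp
  have T3 : ∑ ω : Fin g → Fin G, ∑ t, ∑ t', (∏ t'', pr (ω t'')) * (c (ω t) * c (ω t'))
      = (g:ℝ)^2 * (σ*σ) + (g:ℝ) * (D - σ*σ) := by
    rw [Finset.sum_comm]
    have swap2 : ∀ t : Fin g, ∑ ω : Fin g → Fin G, ∑ t', (∏ t'', pr (ω t'')) * (c (ω t) * c (ω t'))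
        = ∑ t', ∑ ω : Fin g → Fin G, (∏ t'', pr (ω t'')) * (c (ω t) * c (ω t')) :=
      fun t => Finset.sum_comm
    simp_rw [swap2]
    have hcase : ∀ t t' : Fin g, (∑ ω : Fin g → Fin G, (∏ t'', pr (ω t'')) * (c (ω t) * c (ω t')))
        = σ*σ + (if t = t' then D - σ*σ else 0) := by
      intro t t'
      rcases eq_or_ne t t' with rfl | hne
      · simpa [hDdef] using exp_single pr hsum t (fun j => c j * c j)
      · simp [hne, ← hσdef]
        exact exp_pair pr hsum t t' hne c c
    simp_rw [hcase]
    have inner : ∀ x : Fin g, (∑ x1 : Fin g, (σ*σ + if x = x1 then D - σ*σ else 0))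
        = (g:ℝ)*(σ*σ) + (D - σ*σ) := by
      intro x
      rw [Finset.sum_add_distrib, Finset.sum_const, Finset.sum_ite_eq]
      simp [nsmul_eq_mul]
    simp_rw [inner]
    rw [Finset.sum_const]
    simp [nsmul_eq_mul]
    ring
  rw [T1, T2, T3, hσ, hD]
  field_simp
  ring

end Aux

/-- Block stable rank bound on the sampling variance. -/
theorem block_stable_rank_variance_bound (m n q G g : ℕ) (hg : 0 < g)
    (s : Fin G → ℕ)
    (A : Matrix (Fin m) (Fin n) ℝ) (B : Matrix (Fin n) (Fin q) ℝ)
    (Ablk : (j : Fin G) → Matrix (Fin m) (Fin (s j)) ℝ)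
    (Bblk : (j : Fin G) → Matrix (Fin (s j)) (Fin q) ℝ)
    (hAB : A * B = ∑ j : Fin G, Ablk j * Bblk j)
    (hA : frobSq A = ∑ j : Fin G, frobSq (Ablk j))
    (hB : frobSq B = ∑ j : Fin G, frobSq (Bblk j))
    (hAne : ∀ j, Ablk j ≠ 0)
    (pr : Fin G → ℝ) (hpos : ∀ j, 0 < pr j) (hsum : ∑ j : Fin G, pr j = 1)
    (β : ℝ) (hβ : 0 < β) (hβ1 : β ≤ 1)
    (hp : ∀ j, β * (frobSq (Ablk j) / ∑ i : Fin G, frobSq (Ablk i)) ≤ pr j)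
    (hne : (Finset.univ : Finset (Fin G)).Nonempty)
    (α : ℝ) (hα : α = Finset.univ.inf' hne (fun j => frobSq (Ablk j) / (specNorm (Ablk j))^2)) :
    ∑ ω : Fin g → Fin G, (∏ t, pr (ω t)) *
        frobSq (A * B - ∑ t, ((g : ℝ) * pr (ω t))⁻¹ • (Ablk (ω t) * Bblk (ω t)))
      ≤ frobSq A * frobSq B / (β * α * (g : ℝ)) := by
  have hg' : (g:ℝ) ≠ 0 := Nat.cast_ne_zero.mpr hg.ne'
  have hgpos : (0:ℝ) < g := Nat.cast_pos.mpr hg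
  have hAfpos : ∀ j, 0 < frobSq (Ablk j) := fun j => frobSq_pos _ (hAne j)
  have hspos : ∀ j, 0 < specNorm (Ablk j) := fun j => specNorm_pos _ (hAne j)
  have hαle : ∀ j, α ≤ frobSq (Ablk j) / (specNorm (Ablk j))^2 := by
    intro j; rw [hα]; exact Finset.inf'_le _ (Finset.mem_univ j)
  have hαpos : 0 < α := by
    rw [hα]
    rw [Finset.lt_inf'_iff]
    intro j _
    exact div_pos (hAfpos j) (pow_pos (hspos j) 2)
  have hFA : 0 < frobSq A := by
    rw [hA]; exact Finset.sum_pos (fun j _ => hAfpos j) hne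
  have hFB : 0 ≤ frobSq B := frobSq_nonneg B
  -- entrywise rewrite of the Frobenius norm of the error
  have hent : ∀ ω : Fin g → Fin G,
      frobSq (A * B - ∑ t, ((g : ℝ) * pr (ω t))⁻¹ • (Ablk (ω t) * Bblk (ω t)))
      = ∑ i, ∑ l, ((∑ j, (Ablk j * Bblk j) i l)
          - ∑ t, ((g : ℝ) * pr (ω t))⁻¹ * ((Ablk (ω t) * Bblk (ω t)) i l))^2 := by
    intro ω
    rw [frobSq]
    refine Finset.sum_congr rfl fun i _ => Finset.sum_congr rfl fun l _ => ?_
    congr 1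
    rw [Matrix.sub_apply, hAB]
    congr 1
    · simp [Matrix.sum_apply]
    · simp [Matrix.sum_apply]
  simp_rw [hent]
  -- push the weight inside and swap sums
  have hswap : ∑ ω : Fin g → Fin G, (∏ t, pr (ω t)) *
      (∑ i, ∑ l, ((∑ j, (Ablk j * Bblk j) i l)
          - ∑ t, ((g : ℝ) * pr (ω t))⁻¹ * ((Ablk (ω t) * Bblk (ω t)) i l))^2)
      = ∑ i, ∑ l, ∑ ω : Fin g → Fin G, (∏ t, pr (ω t)) *
          ((∑ j, (Ablk j * Bblk j) i l)
          - ∑ t, ((g : ℝ) * pr (ω t))⁻¹ * ((Ablk (ω t) * Bblk (ω t)) i l))^2 := by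
    simp_rw [Finset.mul_sum]
    rw [Finset.sum_comm]
    refine Finset.sum_congr rfl fun i _ => ?_
    rw [Finset.sum_comm]
  rw [hswap]
  -- apply the scalar variance identity entrywise
  have hvar : ∀ (i : Fin m) (l : Fin q),
      (∑ ω : Fin g → Fin G, (∏ t, pr (ω t)) *
          ((∑ j, (Ablk j * Bblk j) i l)
          - ∑ t, ((g : ℝ) * pr (ω t))⁻¹ * ((Ablk (ω t) * Bblk (ω t)) i l))^2)
      ≤ (∑ j, ((Ablk j * Bblk j) i l)^2 / pr j) / g := by
    intro i l
    rw [scalar_var pr hg hpos hsum (fun j => (Ablk j * Bblk j) i l)]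
    have : 0 ≤ (∑ j, (Ablk j * Bblk j) i l)^2 / g :=
      div_nonneg (sq_nonneg _) hgpos.le
    linarith
  calc ∑ i, ∑ l, ∑ ω : Fin g → Fin G, (∏ t, pr (ω t)) *
          ((∑ j, (Ablk j * Bblk j) i l)
          - ∑ t, ((g : ℝ) * pr (ω t))⁻¹ * ((Ablk (ω t) * Bblk (ω t)) i l))^2
      ≤ ∑ i, ∑ l, (∑ j, ((Ablk j * Bblk j) i l)^2 / pr j) / g :=
        Finset.sum_le_sum fun i _ => Finset.sum_le_sum fun l _ => hvar i l
    _ = (∑ i, ∑ l, ∑ j, ((Ablk j * Bblk j) i l)^2 / pr j) / g := by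
        rw [Finset.sum_div]
        refine Finset.sum_congr rfl fun i _ => ?_
        rw [Finset.sum_div]
    _ = (∑ j, frobSq (Ablk j * Bblk j) / pr j) / g := by
        congr 1
        simp_rw [frobSq, Finset.sum_div]
        calc ∑ i, ∑ l, ∑ j, ((Ablk j * Bblk j) i l)^2 / pr j
            = ∑ i, ∑ j, ∑ l, ((Ablk j * Bblk j) i l)^2 / pr j :=
              Finset.sum_congr rfl fun i _ => Finset.sum_comm
          _ = ∑ j, ∑ i, ∑ l, ((Ablk j * Bblk j) i l)^2 / pr j := Finset.sum_comm
    _ ≤ (∑ j, frobSq A * frobSq (Bblk j) / (β * α)) / g := by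
        have hXb : ∀ j, frobSq (Ablk j * Bblk j) / pr j
            ≤ frobSq A * frobSq (Bblk j) / (β * α) := by
          intro j
          have h1 := frobSq_mul_le (Ablk j) (Bblk j)
          have h2 : (specNorm (Ablk j))^2 * α ≤ frobSq (Ablk j) := by
            have h2' := hαle j
            rw [le_div_iff₀ (pow_pos (hspos j) 2)] at h2'
            linarith
          have h3 : β * frobSq (Ablk j) ≤ pr j * frobSq A := by
            have h4 := hp j
            rw [← hA] at h4
            have h4' : β * frobSq (Ablk j) / frobSq A ≤ pr j := by
              rw [mul_div_assoc]; exact h4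
            exact (div_le_iff₀ hFA).mp h4'
          rw [div_le_div_iff₀ (hpos j) (by positivity : (0:ℝ) < β*α)]
          have hBj := frobSq_nonneg (Bblk j)
          nlinarith [mul_le_mul_of_nonneg_right h1 (mul_nonneg hβ.le hαpos.le),
            mul_le_mul_of_nonneg_right h2 (mul_nonneg hBj hβ.le),
            mul_le_mul_of_nonneg_right h3 hBj]
        have hsumle := Finset.sum_le_sum (fun j (_ : j ∈ Finset.univ) => hXb j)
        gcongr
    _ = frobSq A * frobSq B / (β * α * g) := by
        rw [← Finset.sum_div, ← Finset.mul_sum, ← hB, div_div]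
end
end

section
/- Pseudoinverse perturbation bound: if M ∈ ℝ^{k×c} has full row rank k and all singular values satisfy |σ_i(M)^2 − 1| ≤ ε for some 0 ≤ ε < 1, then ||M^† − M^T||_2 = max_i |σ_i(M) − 1/σ_i(M)| ≤ ε / sqrt(1 − ε). -/
open Matrix Finset
open scoped Classical
noncomputable section
open scoped Matrix.Norms.L2Operator

lemma spec_eq {m n : Type*} [Fintype m] [Fintype n] [DecidableEq n] (A : Matrix m n ℝ) :
    specNorm A = ‖A‖ := rfl

lemma l2_diag {n : Type*} [Fintype n] [DecidableEq n] (h : (Finset.univ : Finset n).Nonempty)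
    (v : n → ℝ) : ‖(diagonal v : Matrix n n ℝ)‖ = univ.sup' h (fun i => |v i|) := by
  set b := univ.sup' h (fun i => |v i|) with hbdef
  have hble : ∀ i, |v i| ≤ b := fun i => Finset.le_sup' (fun i => |v i|) (mem_univ i)
  have hb : 0 ≤ b := by
    obtain ⟨i, _⟩ := h
    exact le_trans (abs_nonneg (v i)) (hble i)
  apply le_antisymm
  · rw [l2_opNorm_def]
    apply ContinuousLinearMap.opNorm_le_bound _ hb
    intro x
    simp only [LinearEquiv.trans_apply, LinearMap.coe_toContinuousLinearMap']
    rw [toEuclideanLin_apply, EuclideanSpace.norm_eq, EuclideanSpace.norm_eq]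
    rw [← Real.sqrt_sq hb, ← Real.sqrt_mul (by positivity)]
    apply Real.sqrt_le_sqrt
    rw [Finset.mul_sum]
    apply Finset.sum_le_sum
    intro i _
    simp only [WithLp.ofLp_toLp, mulVec_diagonal, Real.norm_eq_abs]
    rw [abs_mul]
    have : |v i| ^ 2 ≤ b ^ 2 := by
      apply sq_le_sq' _ (hble i); linarith [abs_nonneg (v i), hble i]
    calc (|v i| * |(WithLp.equiv 2 (n → ℝ)) x i|) ^ 2
        = |v i| ^ 2 * |(WithLp.equiv 2 (n → ℝ)) x i| ^ 2 := by ring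
      _ ≤ b ^ 2 * |(WithLp.equiv 2 (n → ℝ)) x i| ^ 2 := by
          apply mul_le_mul_of_nonneg_right this (by positivity)
      _ = b ^ 2 * ‖x i‖ ^ 2 := by rfl
  · obtain ⟨j, _, hj⟩ := Finset.exists_mem_eq_sup' h (fun i => |v i|)
    rw [show b = |v j| from hj]
    have := l2_opNorm_mulVec (diagonal v) (EuclideanSpace.single j (1:ℝ))
    have h1 : ‖(EuclideanSpace.single j (1:ℝ))‖ = 1 := by
      simp [EuclideanSpace.norm_single]
    rw [h1, mul_one] at this
    refine le_trans ?_ this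
    have : (EuclideanSpace.equiv n ℝ).symm (diagonal v *ᵥ EuclideanSpace.single j (1:ℝ))
        = EuclideanSpace.single j (v j) := by
      apply PiLp.ext
      intro i
      simp [mulVec_diagonal, EuclideanSpace.single_apply]
    rw [this, EuclideanSpace.norm_single, Real.norm_eq_abs]

lemma l2_unitary {n : Type*} [Fintype n] [DecidableEq n] (h : (Finset.univ : Finset n).Nonempty)
    {U : Matrix n n ℝ} (hU : U ∈ Matrix.unitaryGroup n ℝ) : ‖U‖ = 1 := by
  have h1 : ‖Uᴴ * U‖ = ‖U‖ * ‖U‖ := l2_opNorm_conjTranspose_mul_self U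
  have h2 : Uᴴ * U = 1 := mem_unitaryGroup_iff'.mp hU
  rw [h2] at h1
  have h3 : ‖(1 : Matrix n n ℝ)‖ = 1 := by
    rw [← diagonal_one, l2_diag h]
    simp
  rw [h3] at h1
  have := norm_nonneg U
  nlinarith

lemma l2_conj {n : Type*} [Fintype n] [DecidableEq n] (h : (Finset.univ : Finset n).Nonempty)
    {U : Matrix n n ℝ} (hU : U ∈ Matrix.unitaryGroup n ℝ) (B : Matrix n n ℝ) :
    ‖U * B * Uᴴ‖ = ‖B‖ := by
  have hUs : Uᴴ ∈ Matrix.unitaryGroup n ℝ := by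
    rw [mem_unitaryGroup_iff, star_eq_conjTranspose, conjTranspose_conjTranspose]
    exact mem_unitaryGroup_iff'.mp hU
  have key : ∀ (V : Matrix n n ℝ), V ∈ Matrix.unitaryGroup n ℝ → ∀ C : Matrix n n ℝ,
      ‖V * C * Vᴴ‖ ≤ ‖C‖ := by
    intro V hV C
    calc ‖V * C * Vᴴ‖ ≤ ‖V * C‖ * ‖Vᴴ‖ := l2_opNorm_mul _ _
      _ ≤ ‖V‖ * ‖C‖ * ‖Vᴴ‖ := by
          apply mul_le_mul_of_nonneg_right (l2_opNorm_mul _ _) (norm_nonneg _)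
      _ = ‖C‖ := by rw [l2_opNorm_conjTranspose, l2_unitary h hV]; ring
  apply le_antisymm (key U hU B)
  have hB : B = Uᴴ * (U * B * Uᴴ) * (Uᴴ)ᴴ := by
    rw [conjTranspose_conjTranspose]
    have h2 : Uᴴ * U = 1 := mem_unitaryGroup_iff'.mp hU
    calc B = (Uᴴ * U) * B * (Uᴴ * U) := by rw [h2, one_mul, mul_one]
      _ = Uᴴ * (U * B * Uᴴ) * U := by noncomm_ring
  conv_lhs => rw [hB]
  exact key _ hUs _

/-- Pseudoinverse perturbation bound. -/
theorem pseudoinverse_perturbation (k c : ℕ) (hk : 0 < k)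
    (M : Matrix (Fin k) (Fin c) ℝ) (hrank : M.rank = k)
    (P : Matrix (Fin c) (Fin k) ℝ) (hP : IsPinv M P)
    (ε : ℝ) (hε0 : 0 ≤ ε) (hε1 : ε < 1)
    (hσ : ∀ i : Fin k,
      |(Matrix.isHermitian_mul_conjTranspose_self M).eigenvalues i - 1| ≤ ε) :
    specNorm (P - Mᵀ)
        = Finset.univ.sup' (Finset.univ_nonempty_iff.mpr (Fin.pos_iff_nonempty.mp hk))
            (fun i : Fin k =>
              |Real.sqrt ((Matrix.isHermitian_mul_conjTranspose_self M).eigenvalues i)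
                - 1 / Real.sqrt ((Matrix.isHermitian_mul_conjTranspose_self M).eigenvalues i)|) ∧
    Finset.univ.sup' (Finset.univ_nonempty_iff.mpr (Fin.pos_iff_nonempty.mp hk))
        (fun i : Fin k =>
          |Real.sqrt ((Matrix.isHermitian_mul_conjTranspose_self M).eigenvalues i)
            - 1 / Real.sqrt ((Matrix.isHermitian_mul_conjTranspose_self M).eigenvalues i)|)
      ≤ ε / Real.sqrt (1 - ε) := by
  obtain ⟨h1, h2, h3, h4⟩ := hP
  set hH := Matrix.isHermitian_mul_conjTranspose_self M with hHdef
  set d : Fin k → ℝ := hH.eigenvalues with hddef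
  set U : Matrix (Fin k) (Fin k) ℝ := ↑(hH.eigenvectorUnitary) with hUdef
  have hUmem : U ∈ Matrix.unitaryGroup (Fin k) ℝ := hH.eigenvectorUnitary.2
  have hUU : Uᴴ * U = 1 := mem_unitaryGroup_iff'.mp hUmem
  have hUU' : U * Uᴴ = 1 := mem_unitaryGroup_iff.mp hUmem
  have hMH : Mᴴ = Mᵀ := conjTranspose_eq_transpose_of_trivial M
  have hdpos : ∀ i, 1 - ε ≤ d i := fun i => by
    have := abs_le.mp (hσ i); linarith [this.1]
  have hd0 : ∀ i, 0 < d i := fun i => lt_of_lt_of_le (by linarith) (hdpos i)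
  have Hspec : M * Mᴴ = U * diagonal d * Uᴴ := by
    have := hH.spectral_theorem
    simp [star_eq_conjTranspose] at this ⊢
    exact this
  set Hinv : Matrix (Fin k) (Fin k) ℝ := U * diagonal d⁻¹ * Uᴴ with hHinvdef
  have hdd : diagonal d * diagonal d⁻¹ = 1 := by
    rw [diagonal_mul_diagonal]
    ext i j
    rcases eq_or_ne i j with rfl | hij
    · simp [mul_inv_cancel₀ (hd0 i).ne']
    · simp [Matrix.diagonal_apply_ne _ hij, Matrix.one_apply_ne hij]
  have hdd' : diagonal d⁻¹ * diagonal d = 1 := by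
    rw [diagonal_mul_diagonal]
    ext i j
    rcases eq_or_ne i j with rfl | hij
    · simp [inv_mul_cancel₀ (hd0 i).ne']
    · simp [Matrix.diagonal_apply_ne _ hij, Matrix.one_apply_ne hij]
  have hHr : (M * Mᴴ) * Hinv = 1 := by
    rw [Hspec, hHinvdef]
    calc U * diagonal d * Uᴴ * (U * diagonal d⁻¹ * Uᴴ)
        = U * diagonal d * (Uᴴ * U) * diagonal d⁻¹ * Uᴴ := by noncomm_ring
      _ = 1 := by rw [hUU, mul_one, mul_assoc, mul_assoc, ← mul_assoc (diagonal d), hdd, one_mul, hUU']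
  have hHl : Hinv * (M * Mᴴ) = 1 := by
    rw [Hspec, hHinvdef]
    calc U * diagonal d⁻¹ * Uᴴ * (U * diagonal d * Uᴴ)
        = U * diagonal d⁻¹ * (Uᴴ * U) * diagonal d * Uᴴ := by noncomm_ring
      _ = 1 := by rw [hUU, mul_one, mul_assoc, mul_assoc, ← mul_assoc (diagonal d⁻¹), hdd', one_mul, hUU']
  have hMP : M * P = 1 := by
    have e1 : (M * P) * (M * Mᴴ) = M * Mᴴ := by rw [← Matrix.mul_assoc, h1]
    calc M * P = (M * P) * ((M * Mᴴ) * Hinv) := by rw [hHr, Matrix.mul_one]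
      _ = ((M * P) * (M * Mᴴ)) * Hinv := by simp only [Matrix.mul_assoc]
      _ = (M * Mᴴ) * Hinv := by rw [e1]
      _ = 1 := hHr
  have hPM : P * M = Mᵀ * Pᵀ := by rw [← h4, transpose_mul]
  have hPtMt : Pᵀ * Mᵀ = 1 := by
    have : (M * P)ᵀ = (1 : Matrix (Fin k) (Fin k) ℝ)ᵀ := by rw [hMP]
    rw [transpose_mul, transpose_one] at this
    exact this
  have hPH : P * (M * Mᴴ) = Mᵀ := by
    calc P * (M * Mᴴ) = (P * M) * Mᴴ := by simp only [Matrix.mul_assoc]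
      _ = Mᵀ * Pᵀ * Mᵀ := by rw [hPM, hMH]
      _ = Mᵀ * (Pᵀ * Mᵀ) := by simp only [Matrix.mul_assoc]
      _ = Mᵀ := by rw [hPtMt, Matrix.mul_one]
  have hPdef : P = Mᵀ * Hinv := by
    calc P = P * ((M * Mᴴ) * Hinv) := by rw [hHr, Matrix.mul_one]
      _ = (P * (M * Mᴴ)) * Hinv := by simp only [Matrix.mul_assoc]
      _ = Mᵀ * Hinv := by rw [hPH]
  have hHinvT : Hinvᴴ = Hinv := by
    rw [hHinvdef, conjTranspose_mul, conjTranspose_mul, conjTranspose_conjTranspose,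
        diagonal_conjTranspose]
    simp only [Matrix.mul_assoc, star_trivial]
  have hPt : Pᵀ = Hinv * M := by
    have hT : Hinvᵀ = Hinv := by rw [← conjTranspose_eq_transpose_of_trivial, hHinvT]
    rw [hPdef, transpose_mul, transpose_transpose, hT]
  have hPtP : Pᵀ * P = Hinv := by
    calc Pᵀ * P = (Hinv * M) * (Mᵀ * Hinv) := by rw [hPt, hPdef]
      _ = (Hinv * (M * Mᴴ)) * Hinv := by rw [hMH]; simp only [Matrix.mul_assoc]
      _ = Hinv := by rw [hHl, Matrix.one_mul]
  set g : Fin k → ℝ := fun i => (d i)⁻¹ + d i - 2 with hgdef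
  have hAtA : (P - Mᵀ)ᵀ * (P - Mᵀ) = U * diagonal g * Uᴴ := by
    have expand : (P - Mᵀ)ᵀ * (P - Mᵀ) = Pᵀ * P - Pᵀ * Mᵀ - (M * P - M * Mᵀ) := by
      rw [transpose_sub, transpose_transpose, Matrix.sub_mul, Matrix.mul_sub, Matrix.mul_sub]
    have hg : diagonal g = diagonal d⁻¹ + diagonal d - (1 + 1) := by
      ext i j
      rcases eq_or_ne i j with rfl | hij
      · simp [hgdef]
        ring
      · simp [Matrix.diagonal_apply_ne _ hij, Matrix.one_apply_ne hij]
    have hrhs : U * (diagonal d⁻¹ + diagonal d - (1+1)) * Uᴴ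
        = U * diagonal d⁻¹ * Uᴴ + U * diagonal d * Uᴴ - (U * Uᴴ + U * Uᴴ) := by
      noncomm_ring
    rw [expand, hPtP, hPtMt, hMP, ← hMH, hg, hrhs, hUU', ← Hspec, ← hHinvdef]
    abel
  have hne : (Finset.univ : Finset (Fin k)).Nonempty := ⟨⟨0, hk⟩, mem_univ _⟩
  have hAconj : (P - Mᵀ)ᴴ = (P - Mᵀ)ᵀ := conjTranspose_eq_transpose_of_trivial _
  have hnorm2 : ‖P - Mᵀ‖ * ‖P - Mᵀ‖ = univ.sup' hne (fun i => |g i|) := by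
    rw [← l2_opNorm_conjTranspose_mul_self, hAconj, hAtA, l2_conj hne hUmem, l2_diag hne]
  set f : Fin k → ℝ := fun i => |Real.sqrt (d i) - 1 / Real.sqrt (d i)| with hfdef
  have hfg : ∀ i, |g i| = f i ^ 2 := by
    intro i
    have hs : 0 < Real.sqrt (d i) := Real.sqrt_pos.mpr (hd0 i)
    have hsq : Real.sqrt (d i) ^ 2 = d i := Real.sq_sqrt (hd0 i).le
    have hfi : f i ^ 2 = g i := by
      rw [hfdef]
      dsimp only
      rw [sq_abs, sub_sq, hsq]
      have h1 : (1 / Real.sqrt (d i))^2 = (d i)⁻¹ := by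
        rw [div_pow, one_pow, hsq, one_div]
      have h2 : 2 * Real.sqrt (d i) * (1 / Real.sqrt (d i)) = 2 := by
        field_simp
      rw [h1, h2]
      simp only [hgdef]
      ring
    rw [← hfi, abs_of_nonneg (sq_nonneg _)]
  have hf0 : ∀ i, 0 ≤ f i := fun i => abs_nonneg _
  have hsup0 : 0 ≤ univ.sup' hne f := by
    obtain ⟨i, _⟩ := hne
    exact le_trans (hf0 i) (Finset.le_sup' f (mem_univ i))
  have hsup_sq : univ.sup' hne (fun i => |g i|) = (univ.sup' hne f)^2 := by
    apply le_antisymm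
    · apply Finset.sup'_le
      intro i _
      rw [hfg i]
      exact pow_le_pow_left₀ (hf0 i) (Finset.le_sup' f (mem_univ i)) 2
    · obtain ⟨j, _, hj⟩ := Finset.exists_mem_eq_sup' hne f
      rw [show univ.sup' hne f = f j from hj, ← hfg j]
      exact Finset.le_sup' (fun i => |g i|) (mem_univ j)
  have hAnorm : ‖P - Mᵀ‖ = univ.sup' hne f := by
    calc ‖P - Mᵀ‖ = Real.sqrt (‖P - Mᵀ‖ * ‖P - Mᵀ‖) := (Real.sqrt_mul_self (norm_nonneg _)).symm
      _ = Real.sqrt ((univ.sup' hne f)^2) := by rw [hnorm2, hsup_sq]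
      _ = univ.sup' hne f := Real.sqrt_sq hsup0
  have hineq : univ.sup' hne f ≤ ε / Real.sqrt (1 - ε) := by
    apply Finset.sup'_le
    intro i _
    have hs : 0 < Real.sqrt (d i) := Real.sqrt_pos.mpr (hd0 i)
    have h1e : (0:ℝ) < 1 - ε := by linarith
    have hse : Real.sqrt (1 - ε) ≤ Real.sqrt (d i) := Real.sqrt_le_sqrt (hdpos i)
    have hse0 : 0 < Real.sqrt (1 - ε) := Real.sqrt_pos.mpr h1e
    have hkey : f i = |d i - 1| / Real.sqrt (d i) := by
      rw [hfdef]
      dsimp only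
      have h3 : Real.sqrt (d i) - 1 / Real.sqrt (d i) = (d i - 1) / Real.sqrt (d i) := by
        rw [eq_div_iff hs.ne', sub_mul, div_mul_cancel₀ _ hs.ne',
            Real.mul_self_sqrt (hd0 i).le]
      rw [h3, abs_div, abs_of_pos hs]
    rw [hkey]
    exact div_le_div₀ hε0 (hσ i) hse0 hse
  refine ⟨?_, ?_⟩
  · rw [spec_eq]
    exact hAnorm
  · exact hineq
end
end

section
/- Pseudoinverse composition identity for Block CUR: let B ∈ ℝ^{r×n} have SVD B = U_k Σ_k V_k^T with Σ_k ∈ ℝ^{k×k} invertible (rank(B) = k), and let S ∈ ℝ^{n×c} be such that V_k^T S has full row rank k. Then (B S)^† = (V_k^T S)^† Σ_k^{-1} U_k^T, and consequently A S (B S)^† B = A S (V_k^T S)^† V_k^T for any A ∈ ℝ^{m×n}. -/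
open Matrix Finset
open scoped Classical
noncomputable section
/-- A full-rank square real matrix has a right inverse. -/
lemma exists_right_inv_of_rank_eq {k : ℕ} (E : Matrix (Fin k) (Fin k) ℝ)
    (h : E.rank = k) : ∃ F : Matrix (Fin k) (Fin k) ℝ, E * F = 1 := by
  have hsurj : Function.Surjective E.mulVecLin := by
    rw [← LinearMap.range_eq_top]
    apply Submodule.eq_top_of_finrank_eq
    rw [← Matrix.rank, h]
    simp
  choose x hx using fun j => hsurj (Pi.single j 1)
  refine ⟨Matrix.of (fun i j => x j i), ?_⟩
  ext i j
  have := congrFun (hx j) i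
  simp only [Matrix.mulVecLin_apply, Matrix.mulVec, dotProduct] at this
  simp only [Matrix.mul_apply, Matrix.of_apply, Matrix.one_apply]
  rw [this, Pi.single_apply]

/-- Uniqueness of the Moore-Penrose pseudoinverse. -/
lemma isPinv_unique {m n : Type*} [Fintype m] [Fintype n] (M : Matrix m n ℝ)
    (P P' : Matrix n m ℝ) (hP : IsPinv M P) (hP' : IsPinv M P') : P = P' := by
  obtain ⟨h1, h2, h3, h4⟩ := hP
  obtain ⟨h1', h2', h3', h4'⟩ := hP'
  have e1 : P = P * M * P' := by
    calc P = P * M * P := h2.symm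
    _ = P * (M * P)ᵀ := by rw [h3, Matrix.mul_assoc]
    _ = P * (M * P' * M * P)ᵀ := by rw [show M * P' * M * P = M * P by rw [h1']]
    _ = P * ((M * P') * (M * P))ᵀ := by simp only [Matrix.mul_assoc]
    _ = P * ((M * P)ᵀ * (M * P')ᵀ) := by rw [Matrix.transpose_mul]
    _ = P * ((M * P) * (M * P')) := by rw [h3, h3']
    _ = (P * M * P) * M * P' := by simp only [Matrix.mul_assoc]
    _ = P * M * P' := by rw [h2]
  have e2 : P' = P * M * P' := by
    calc P' = P' * M * P' := h2'.symm
    _ = (P' * M)ᵀ * P' := by rw [h4']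
    _ = (P' * (M * P * M))ᵀ * P' := by rw [h1]
    _ = ((P' * M) * (P * M))ᵀ * P' := by simp only [Matrix.mul_assoc]
    _ = (P * M)ᵀ * (P' * M)ᵀ * P' := by rw [Matrix.transpose_mul]
    _ = (P * M) * (P' * M) * P' := by rw [h4, h4']
    _ = P * M * (P' * M * P') := by simp only [Matrix.mul_assoc]
    _ = P * M * P' := by rw [h2']
  rw [e1, ← e2]

lemma diag_inv_mul {k : ℕ} (d : Fin k → ℝ) (hd : ∀ i, 0 < d i) :
    (Matrix.diagonal d)⁻¹ * Matrix.diagonal d = 1 ∧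
    Matrix.diagonal d * (Matrix.diagonal d)⁻¹ = 1 := by
  have h : IsUnit (Matrix.diagonal d).det := by
    rw [Matrix.det_diagonal]
    exact (Finset.prod_pos (fun i _ => hd i)).ne'.isUnit
  exact ⟨Matrix.nonsing_inv_mul _ h, Matrix.mul_nonsing_inv _ h⟩

/-- Pseudoinverse composition identity for Block CUR. -/
theorem pinv_composition_block_cur (m r n c k : ℕ)
    (B : Matrix (Fin r) (Fin n) ℝ)
    (U : Matrix (Fin r) (Fin k) ℝ) (hU : Uᵀ * U = 1)
    (V : Matrix (Fin n) (Fin k) ℝ) (hV : Vᵀ * V = 1)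
    (d : Fin k → ℝ) (hd : ∀ i, 0 < d i)
    (hB : B = U * Matrix.diagonal d * Vᵀ)
    (S : Matrix (Fin n) (Fin c) ℝ) (hrank : (Vᵀ * S).rank = k)
    (P : Matrix (Fin c) (Fin r) ℝ) (hP : IsPinv (B * S) P)
    (Q : Matrix (Fin c) (Fin k) ℝ) (hQ : IsPinv (Vᵀ * S) Q)
    (A : Matrix (Fin m) (Fin n) ℝ) :
    P = Q * (Matrix.diagonal d)⁻¹ * Uᵀ ∧
    A * S * P * B = A * S * Q * Vᵀ := by
  set D := Matrix.diagonal d with hD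
  set M := Vᵀ * S with hM
  obtain ⟨hDi1, hDi2⟩ := diag_inv_mul d hd
  obtain ⟨q1, q2, q3, q4⟩ := hQ
  -- M * Q = 1
  have hMQ : M * Q = 1 := by
    have hrankMQ : (M * Q).rank = k := by
      refine le_antisymm ?_ ?_
      · simpa using (M * Q).rank_le_card_width
      · calc k = M.rank := hrank.symm
        _ = (M * Q * M).rank := by rw [q1]
        _ ≤ (M * Q).rank := Matrix.rank_mul_le_left _ _
    obtain ⟨F, hF⟩ := exists_right_inv_of_rank_eq (M * Q) hrankMQ
    have idem : (M * Q) * (M * Q) = M * Q := by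
      calc (M * Q) * (M * Q) = (M * Q * M) * Q := by simp only [Matrix.mul_assoc]
      _ = M * Q := by rw [q1]
    calc M * Q = M * Q * ((M * Q) * F) := by rw [hF, Matrix.mul_one]
    _ = ((M * Q) * (M * Q)) * F := by simp only [Matrix.mul_assoc]
    _ = M * Q * F := by rw [idem]
    _ = 1 := hF
  have hBS : B * S = U * D * M := by rw [hB, hM]; simp only [Matrix.mul_assoc]
  -- the candidate pseudoinverse
  have hP' : IsPinv (B * S) (Q * D⁻¹ * Uᵀ) := by
    have key : (B * S) * (Q * D⁻¹ * Uᵀ) = U * Uᵀ := by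
      calc (B * S) * (Q * D⁻¹ * Uᵀ) = U * ((D * (M * Q)) * D⁻¹) * Uᵀ := by
            rw [hBS]; simp only [Matrix.mul_assoc]
      _ = U * Uᵀ := by rw [hMQ, Matrix.mul_one, hDi2, Matrix.mul_one]
    have key2 : (Q * D⁻¹ * Uᵀ) * (B * S) = Q * M := by
      calc (Q * D⁻¹ * Uᵀ) * (B * S) = Q * (D⁻¹ * ((Uᵀ * U) * D)) * M := by
            rw [hBS]; simp only [Matrix.mul_assoc]
      _ = Q * M := by rw [hU, Matrix.one_mul, hDi1, Matrix.mul_one]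
    refine ⟨?_, ?_, ?_, ?_⟩
    · calc (B * S) * (Q * D⁻¹ * Uᵀ) * (B * S) = (U * Uᵀ) * (U * D * M) := by
            rw [key, hBS]
      _ = U * (Uᵀ * U) * D * M := by simp only [Matrix.mul_assoc]
      _ = B * S := by rw [hU, Matrix.mul_one, hBS]
    · calc (Q * D⁻¹ * Uᵀ) * (B * S) * (Q * D⁻¹ * Uᵀ) = (Q * M * Q) * D⁻¹ * Uᵀ := by
            rw [key2]; simp only [Matrix.mul_assoc]
      _ = Q * D⁻¹ * Uᵀ := by rw [q2]
    · rw [key, Matrix.transpose_mul, Matrix.transpose_transpose]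
    · rw [key2]
      calc (Q * M)ᵀ = (M * Q * M)ᵀ * Qᵀ := by rw [q1, Matrix.transpose_mul]
      _ = Mᵀ * (M * Q)ᵀ * Qᵀ := by rw [Matrix.transpose_mul (M * Q) M]
      _ = Mᵀ * Qᵀ := by rw [hMQ]; simp only [Matrix.transpose_one, Matrix.mul_one]
      _ = (Q * M)ᵀ := by rw [← Matrix.transpose_mul]
      _ = Q * M := q4
  have hPeq : P = Q * D⁻¹ * Uᵀ := isPinv_unique (B * S) P _ hP hP'
  refine ⟨hPeq, ?_⟩
  rw [hPeq, hB]
  calc A * S * (Q * D⁻¹ * Uᵀ) * (U * D * Vᵀ)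
      = A * S * Q * (D⁻¹ * ((Uᵀ * U) * D)) * Vᵀ := by simp only [Matrix.mul_assoc]
  _ = A * S * Q * Vᵀ := by rw [hU, Matrix.one_mul, hDi1, Matrix.mul_one]
end
end

section
/- Deterministic structural bound for subsampled regression: let B ∈ ℝ^{r×n} have rank k with right singular vectors V_k, let A ∈ ℝ^{m×n}, and let S ∈ ℝ^{n×c} be any matrix such that V_k^T S has full row rank k. Writing Ω = (V_k^T S)^† − (V_k^T S)^T and P^⊥ = I − V_k V_k^T, we have ||A − A S (B S)^† B||_F ≤ ||A P^⊥||_F + ||A P^⊥ S||_F · ||Ω||_2 + ||A P^⊥ S S^T V_k||_F. -/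
open Matrix Finset
open scoped Classical
noncomputable section
section Aux

open scoped Matrix.Norms.L2Operator

variable {a b p q : Type*} [Fintype a] [Fintype b] [Fintype p] [Fintype q]

lemma frobSq_nonneg_s14 (X : Matrix a b ℝ) : 0 ≤ frobSq X :=
  Finset.sum_nonneg fun _ _ => Finset.sum_nonneg fun _ _ => sq_nonneg _

lemma frob_nonneg (X : Matrix a b ℝ) : 0 ≤ frob X := Real.sqrt_nonneg _

lemma frob_eq_norm (X : Matrix a b ℝ) :
    frob X =
      ‖((WithLp.equiv 2 (a × b → ℝ)).symm fun p => X p.1 p.2 : EuclideanSpace ℝ (a × b))‖ := by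
  have h : frobSq X = ∑ p : a × b,
      ‖((WithLp.equiv 2 (a × b → ℝ)).symm fun p => X p.1 p.2 : EuclideanSpace ℝ (a × b)) p‖ ^ 2 := by
    simp only [WithLp.equiv_symm_apply, PiLp.toLp_apply, Real.norm_eq_abs, sq_abs]
    rw [frobSq]
    exact (Fintype.sum_prod_type' _).symm
  rw [frob, h, ← EuclideanSpace.norm_eq]

lemma frob_add_le (X Y : Matrix a b ℝ) : frob (X + Y) ≤ frob X + frob Y := by
  rw [frob_eq_norm, frob_eq_norm, frob_eq_norm]
  have h : ((WithLp.equiv 2 (a × b → ℝ)).symm fun p => (X + Y) p.1 p.2 : EuclideanSpace ℝ (a × b)) =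
      ((WithLp.equiv 2 (a × b → ℝ)).symm fun p => X p.1 p.2)
        + ((WithLp.equiv 2 (a × b → ℝ)).symm fun p => Y p.1 p.2) := rfl
  rw [h]
  exact norm_add_le _ _

lemma frob_neg (X : Matrix a b ℝ) : frob (-X) = frob X := by
  simp [frob, frobSq]

lemma frob_sub_sub_le (X Y Z : Matrix a b ℝ) : frob (X - Y - Z) ≤ frob X + frob Y + frob Z := by
  have h1 : frob (X - Y - Z) ≤ frob (X - Y) + frob (-Z) := by
    rw [sub_eq_add_neg]; exact frob_add_le _ _
  have h2 : frob (X - Y) ≤ frob X + frob (-Y) := by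
    rw [sub_eq_add_neg]; exact frob_add_le _ _
  rw [frob_neg] at h1 h2
  linarith

lemma frobSq_eq_trace (X : Matrix a b ℝ) : frobSq X = Matrix.trace (X * Xᵀ) := by
  simp [frobSq, Matrix.trace, Matrix.diag, Matrix.mul_apply, sq]

lemma frob_mul_orth {k' : Type*} [Fintype k'] [DecidableEq k'] (V : Matrix b k' ℝ) (hV : Vᵀ * V = 1)
    (M : Matrix a k' ℝ) : frob (M * Vᵀ) = frob M := by
  unfold frob
  congr 1
  rw [frobSq_eq_trace, frobSq_eq_trace, Matrix.transpose_mul, Matrix.transpose_transpose,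
    Matrix.mul_assoc, ← Matrix.mul_assoc Vᵀ V Mᵀ, hV, Matrix.one_mul]

lemma specNorm_eq [DecidableEq b] (N : Matrix a b ℝ) : specNorm N = ‖N‖ := rfl

lemma specNorm_nonneg [DecidableEq b] (N : Matrix a b ℝ) : 0 ≤ specNorm N :=
  norm_nonneg _

lemma specNorm_transpose [DecidableEq a] [DecidableEq b] (N : Matrix a b ℝ) :
    specNorm Nᵀ = specNorm N := by
  have h : Nᵀ = Nᴴ := by ext i j; simp [Matrix.conjTranspose_apply]
  rw [specNorm_eq, specNorm_eq, h, Matrix.l2_opNorm_conjTranspose]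

lemma frob_mul_le [DecidableEq a] [DecidableEq p] [DecidableEq q]
    (M : Matrix a p ℝ) (N : Matrix p q ℝ) :
    frob (M * N) ≤ frob M * specNorm N := by
  have hrow : ∀ i, ∑ j, ((M * N) i j)^2 ≤ (specNorm N)^2 * ∑ j, (M i j)^2 := by
    intro i
    set x : EuclideanSpace ℝ p := (WithLp.equiv 2 (p → ℝ)).symm (M i) with hx
    have hb := Matrix.l2_opNorm_mulVec Nᵀ x
    have e1 : ‖(EuclideanSpace.equiv q ℝ).symm (Nᵀ *ᵥ x)‖^2 = ∑ j, ((M * N) i j)^2 := by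
      rw [EuclideanSpace.norm_eq, Real.sq_sqrt (Finset.sum_nonneg fun _ _ => by positivity)]
      refine Finset.sum_congr rfl fun j _ => ?_
      have hj : ((EuclideanSpace.equiv q ℝ).symm (Nᵀ *ᵥ x)) j = (M * N) i j := by
        show (Nᵀ *ᵥ (M i)) j = (M * N) i j
        simp [Matrix.mulVec, Matrix.mul_apply, dotProduct, Matrix.transpose_apply, mul_comm]
      rw [hj, Real.norm_eq_abs, sq_abs]
    have e2 : ‖x‖^2 = ∑ j, (M i j)^2 := by
      rw [EuclideanSpace.norm_eq, Real.sq_sqrt (Finset.sum_nonneg fun _ _ => by positivity)]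
      refine Finset.sum_congr rfl fun j _ => ?_
      rw [Real.norm_eq_abs, sq_abs]
      rfl
    have hsq : ‖(EuclideanSpace.equiv q ℝ).symm (Nᵀ *ᵥ x)‖^2 ≤ (‖Nᵀ‖ * ‖x‖)^2 := by
      nlinarith [norm_nonneg x, norm_nonneg ((EuclideanSpace.equiv q ℝ).symm (Nᵀ *ᵥ x))]
    rw [e1] at hsq
    calc ∑ j, ((M * N) i j)^2 ≤ (‖Nᵀ‖ * ‖x‖)^2 := hsq
      _ = (specNorm N)^2 * ∑ j, (M i j)^2 := by
          rw [mul_pow, e2, ← specNorm_eq, specNorm_transpose]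
  have hsum : frobSq (M * N) ≤ (specNorm N)^2 * frobSq M := by
    unfold frobSq
    rw [Finset.mul_sum]
    exact Finset.sum_le_sum fun i _ => hrow i
  calc frob (M * N) = Real.sqrt (frobSq (M * N)) := rfl
    _ ≤ Real.sqrt ((specNorm N)^2 * frobSq M) := Real.sqrt_le_sqrt hsum
    _ = specNorm N * Real.sqrt (frobSq M) := by
        rw [Real.sqrt_mul (sq_nonneg _), Real.sqrt_sq (specNorm_nonneg N)]
    _ = frob M * specNorm N := mul_comm _ _

lemma mul_cancel_left {i j t : Type*} [Fintype i] [Fintype j] [DecidableEq j] [Fintype t]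
    {G : Matrix i j ℝ} {H : Matrix j i ℝ} (h : H * G = 1) (X : Matrix j t ℝ) :
    H * (G * X) = X := by rw [← Matrix.mul_assoc, h, Matrix.one_mul]

lemma pinv_unique {M : Matrix a b ℝ} {P P' : Matrix b a ℝ}
    (h : IsPinv M P) (h' : IsPinv M P') : P = P' := by
  obtain ⟨h1, h2, h3, h4⟩ := h
  obtain ⟨h1', h2', h3', h4'⟩ := h'
  have e1 : M * P = M * P' := by
    calc M * P = (M * P)ᵀ := h3.symm
      _ = Pᵀ * Mᵀ := Matrix.transpose_mul _ _
      _ = Pᵀ * (M * P' * M)ᵀ := by rw [h1']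
      _ = Pᵀ * (Mᵀ * (M * P')ᵀ) := by rw [Matrix.transpose_mul (M * P') M]
      _ = Pᵀ * (Mᵀ * (M * P')) := by rw [h3']
      _ = (Pᵀ * Mᵀ) * (M * P') := (Matrix.mul_assoc _ _ _).symm
      _ = (M * P)ᵀ * (M * P') := by rw [Matrix.transpose_mul]
      _ = (M * P) * (M * P') := by rw [h3]
      _ = ((M * P) * M) * P' := (Matrix.mul_assoc _ _ _).symm
      _ = M * P' := by rw [h1]
  have e2 : P * M = P' * M := by
    calc P * M = (P * M)ᵀ := h4.symm
      _ = Mᵀ * Pᵀ := Matrix.transpose_mul _ _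
      _ = (M * P' * M)ᵀ * Pᵀ := by rw [h1']
      _ = (M * (P' * M))ᵀ * Pᵀ := by rw [Matrix.mul_assoc]
      _ = ((P' * M)ᵀ * Mᵀ) * Pᵀ := by rw [Matrix.transpose_mul M (P' * M)]
      _ = ((P' * M) * Mᵀ) * Pᵀ := by rw [h4']
      _ = (P' * M) * (Mᵀ * Pᵀ) := Matrix.mul_assoc _ _ _
      _ = (P' * M) * (P * M)ᵀ := by rw [Matrix.transpose_mul]
      _ = (P' * M) * (P * M) := by rw [h4]
      _ = P' * (M * (P * M)) := Matrix.mul_assoc _ _ _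
      _ = P' * ((M * P) * M) := by rw [← Matrix.mul_assoc M P M]
      _ = P' * M := by rw [h1]
  calc P = P * M * P := h2.symm
    _ = P * (M * P) := Matrix.mul_assoc _ _ _
    _ = P * (M * P') := by rw [e1]
    _ = (P * M) * P' := (Matrix.mul_assoc _ _ _).symm
    _ = (P' * M) * P' := by rw [e2]
    _ = P' := h2'

end Aux

/-- Deterministic structural bound for subsampled regression. -/
theorem subsampled_regression_structural_bound (m r n c k : ℕ)
    (B : Matrix (Fin r) (Fin n) ℝ)
    (U : Matrix (Fin r) (Fin k) ℝ) (hU : Uᵀ * U = 1)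
    (V : Matrix (Fin n) (Fin k) ℝ) (hV : Vᵀ * V = 1)
    (d : Fin k → ℝ) (hd : ∀ i, 0 < d i)
    (hB : B = U * Matrix.diagonal d * Vᵀ)
    (S : Matrix (Fin n) (Fin c) ℝ) (hrank : (Vᵀ * S).rank = k)
    (P : Matrix (Fin c) (Fin r) ℝ) (hP : IsPinv (B * S) P)
    (Q : Matrix (Fin c) (Fin k) ℝ) (hQ : IsPinv (Vᵀ * S) Q)
    (A : Matrix (Fin m) (Fin n) ℝ) :
    frob (A - A * S * P * B)
      ≤ frob (A * ((1 : Matrix (Fin n) (Fin n) ℝ) - V * Vᵀ))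
        + frob (A * ((1 : Matrix (Fin n) (Fin n) ℝ) - V * Vᵀ) * S)
            * specNorm (Q - (Vᵀ * S)ᵀ)
        + frob (A * ((1 : Matrix (Fin n) (Fin n) ℝ) - V * Vᵀ) * S * Sᵀ * V) := by
  have hDD' : Matrix.diagonal d * Matrix.diagonal (fun i => (d i)⁻¹) = 1 := by
    rw [Matrix.diagonal_mul_diagonal,
      show (fun i => d i * (d i)⁻¹) = fun _ => (1 : ℝ) from
        funext fun i => mul_inv_cancel₀ (hd i).ne', Matrix.diagonal_one]
  have hD'D : Matrix.diagonal (fun i => (d i)⁻¹) * Matrix.diagonal d = 1 := by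
    rw [Matrix.diagonal_mul_diagonal,
      show (fun i => (d i)⁻¹ * d i) = fun _ => (1 : ℝ) from
        funext fun i => inv_mul_cancel₀ (hd i).ne', Matrix.diagonal_one]
  -- (Vᵀ S) Q = 1
  have hGrank : ((Vᵀ * S) * (Vᵀ * S)ᵀ).rank = k := by
    rw [Matrix.rank_self_mul_transpose]; exact hrank
  have hGunit : IsUnit ((Vᵀ * S) * (Vᵀ * S)ᵀ) := by
    have hfin : Module.finrank ℝ (LinearMap.range ((Vᵀ * S) * (Vᵀ * S)ᵀ).mulVecLin)
        = Module.finrank ℝ (Fin k → ℝ) := by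
      unfold Matrix.rank at hGrank
      rw [hGrank, Module.finrank_fin_fun]
    have htop : LinearMap.range ((Vᵀ * S) * (Vᵀ * S)ᵀ).mulVecLin = ⊤ :=
      Submodule.eq_top_of_finrank_eq hfin
    have hsurj : Function.Surjective ((Vᵀ * S) * (Vᵀ * S)ᵀ).mulVec := by
      intro y
      obtain ⟨x, hx⟩ := LinearMap.range_eq_top.mp htop y
      exact ⟨x, hx⟩
    exact Matrix.mulVec_surjective_iff_isUnit.mp hsurj
  have hWQ : (Vᵀ * S) * Q = 1 := by
    have hdet : IsUnit ((Vᵀ * S) * (Vᵀ * S)ᵀ).det :=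
      (Matrix.isUnit_iff_isUnit_det _).mp hGunit
    have hinv : ((Vᵀ * S) * (Vᵀ * S)ᵀ) * ((Vᵀ * S) * (Vᵀ * S)ᵀ)⁻¹ = 1 :=
      Matrix.mul_nonsing_inv _ hdet
    have hstep : ((Vᵀ * S) * Q) * ((Vᵀ * S) * (Vᵀ * S)ᵀ) = (Vᵀ * S) * (Vᵀ * S)ᵀ := by
      rw [← Matrix.mul_assoc, hQ.1]
    calc (Vᵀ * S) * Q
        = ((Vᵀ * S) * Q) * (((Vᵀ * S) * (Vᵀ * S)ᵀ) * ((Vᵀ * S) * (Vᵀ * S)ᵀ)⁻¹) := by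
          rw [hinv, Matrix.mul_one]
      _ = (((Vᵀ * S) * Q) * ((Vᵀ * S) * (Vᵀ * S)ᵀ)) * ((Vᵀ * S) * (Vᵀ * S)ᵀ)⁻¹ :=
          (Matrix.mul_assoc _ _ _).symm
      _ = ((Vᵀ * S) * (Vᵀ * S)ᵀ) * ((Vᵀ * S) * (Vᵀ * S)ᵀ)⁻¹ := by rw [hstep]
      _ = 1 := hinv
  have hWQ3 : ∀ {t : Type} [Fintype t] (X : Matrix (Fin k) t ℝ),
      Vᵀ * (S * (Q * X)) = X := by
    intro t _ X
    rw [← Matrix.mul_assoc Vᵀ S, ← Matrix.mul_assoc, hWQ, Matrix.one_mul]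
  -- P = Q * D' * Uᵀ
  have hMP : (U * Matrix.diagonal d * Vᵀ * S) * (Q * Matrix.diagonal (fun i => (d i)⁻¹) * Uᵀ)
      = U * Uᵀ := by
    simp only [Matrix.mul_assoc]
    rw [hWQ3, mul_cancel_left hDD']
  have hPM : (Q * Matrix.diagonal (fun i => (d i)⁻¹) * Uᵀ) * (U * Matrix.diagonal d * Vᵀ * S)
      = Q * (Vᵀ * S) := by
    simp only [Matrix.mul_assoc]
    rw [mul_cancel_left hU, mul_cancel_left hD'D]
  have hP2 : IsPinv (B * S) (Q * Matrix.diagonal (fun i => (d i)⁻¹) * Uᵀ) := by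
    have hBS : B * S = U * Matrix.diagonal d * Vᵀ * S := by rw [hB]
    rw [hBS]
    refine ⟨?_, ?_, ?_, ?_⟩
    · rw [hMP]
      simp only [Matrix.mul_assoc]
      rw [mul_cancel_left hU]
    · rw [hPM]
      simp only [Matrix.mul_assoc]
      rw [hWQ3]
    · rw [hMP, Matrix.transpose_mul, Matrix.transpose_transpose]
    · rw [hPM]
      exact hQ.2.2.2
  have hPeq : P = Q * Matrix.diagonal (fun i => (d i)⁻¹) * Uᵀ := pinv_unique hP hP2
  -- key algebraic identity
  have hUU : ∀ (X : Matrix (Fin k) (Fin n) ℝ), Uᵀ * (U * X) = X :=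
    fun X => mul_cancel_left hU X
  have hDDl : ∀ (X : Matrix (Fin k) (Fin n) ℝ),
      Matrix.diagonal (fun i => (d i)⁻¹) * (Matrix.diagonal d * X) = X :=
    fun X => mul_cancel_left hD'D X
  have hWQn : ∀ (X : Matrix (Fin k) (Fin n) ℝ), Vᵀ * (S * (Q * X)) = X := fun X => hWQ3 X
  have hkey : A - A * S * P * B
      = A * ((1 : Matrix (Fin n) (Fin n) ℝ) - V * Vᵀ)
        - (A * ((1 : Matrix (Fin n) (Fin n) ℝ) - V * Vᵀ) * S * (Q - (Vᵀ * S)ᵀ)) * Vᵀ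
        - (A * ((1 : Matrix (Fin n) (Fin n) ℝ) - V * Vᵀ) * S * Sᵀ * V) * Vᵀ := by
    rw [hPeq, hB]
    simp only [Matrix.mul_sub, Matrix.sub_mul, Matrix.mul_one, Matrix.one_mul,
      Matrix.transpose_mul, Matrix.transpose_transpose, Matrix.mul_assoc]
    simp only [hUU, hDDl, hWQn]
    abel
  rw [hkey]
  have t1 := frob_sub_sub_le
    (A * ((1 : Matrix (Fin n) (Fin n) ℝ) - V * Vᵀ))
    ((A * ((1 : Matrix (Fin n) (Fin n) ℝ) - V * Vᵀ) * S * (Q - (Vᵀ * S)ᵀ)) * Vᵀ)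
    ((A * ((1 : Matrix (Fin n) (Fin n) ℝ) - V * Vᵀ) * S * Sᵀ * V) * Vᵀ)
  rw [frob_mul_orth V hV, frob_mul_orth V hV] at t1
  have t2 : frob (A * ((1 : Matrix (Fin n) (Fin n) ℝ) - V * Vᵀ) * S * (Q - (Vᵀ * S)ᵀ))
      ≤ frob (A * ((1 : Matrix (Fin n) (Fin n) ℝ) - V * Vᵀ) * S) * specNorm (Q - (Vᵀ * S)ᵀ) :=
    frob_mul_le _ _
  linarith
end
end
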